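/- Let f1, f2, f3, f4 ∈ ℝ[q0, q1, q2, q3] be quadrics in four unknowns. Regard q0 as a parameter and form the Dixon matrix D(q0) = Dix(f1,f2,f3,f4; q1,q2,q3) over ℝ[q0]. If (s0,s1,s2,s3) is a common zero of f1,...,f4, then the univariate polynomial det D(q0) ∈ ℝ[q0] vanishes at q0 = s0. -/

import Mathlib

open MvPolynomial

/-- Separation of six variables over the coefficient ring `ℝ[q0]`:
outer `y`-variables (indices 3,4,5), inner `x`-variables (indices 0,1,2). -/
noncomputable def sepVarsP :
    MvPolynomial (Fin 6) (Polynomial ℝ) ≃ₐ[Polynomial ℝ]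
      MvPolynomial (Fin 3) (MvPolynomial (Fin 3) (Polynomial ℝ)) :=
  (renameEquiv (Polynomial ℝ) (finSumFinEquiv (m := 3) (n := 3)).symm).trans
    ((renameEquiv (Polynomial ℝ) (Equiv.sumComm (Fin 3) (Fin 3))).trans
      (sumAlgEquiv (Polynomial ℝ) (Fin 3) (Fin 3)))

namespace DixAux

lemma natAdd_inj : Function.Injective (Fin.natAdd 3 : Fin 3 → Fin 6) := by
  intro a b hab
  have := congrArg Fin.val hab
  simp at this
  exact Fin.ext this

lemma notin_range_natAdd (i : Fin 3) : ¬ ∃ j : Fin 3, Fin.natAdd 3 j = Fin.castAdd 3 i := by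
  rintro ⟨j, hj⟩
  have := congrArg Fin.val hj
  simp at this
  omega

lemma notin_range_castAdd (i : Fin 3) : ¬ ∃ j : Fin 3, Fin.castAdd 3 j = Fin.natAdd 3 i := by
  rintro ⟨j, hj⟩
  have := congrArg Fin.val hj
  simp at this
  omega

lemma sep_C (r : Polynomial ℝ) : sepVarsP (C r) = C (C r) := by
  simp [sepVarsP, sumAlgEquiv_C_inl]

lemma sep_X_low (k : Fin 3) : sepVarsP (X (Fin.castAdd 3 k)) = C (X k) := by
  simp only [sepVarsP, AlgEquiv.trans_apply, renameEquiv_apply, rename_X,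
    finSumFinEquiv_symm_apply_castAdd, Equiv.sumComm_apply, Sum.swap_inl]
  simp [sumAlgEquiv_X_inr]

lemma sep_X_high (k : Fin 3) : sepVarsP (X (Fin.natAdd 3 k)) = X k := by
  simp only [sepVarsP, AlgEquiv.trans_apply, renameEquiv_apply, rename_X,
    finSumFinEquiv_symm_apply_natAdd, Equiv.sumComm_apply, Sum.swap_inr]
  simp [sumAlgEquiv_X_inl]

lemma sep_rename_low (q : MvPolynomial (Fin 3) (Polynomial ℝ)) :
    sepVarsP (rename (Fin.castAdd 3) q) = C q := by
  induction q using MvPolynomial.induction_on with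
  | C r => rw [rename_C, sep_C]
  | add p q hp hq => rw [map_add, map_add, hp, hq, map_add]
  | mul_X p i hp => rw [map_mul, map_mul, hp, rename_X, sep_X_low, map_mul]

lemma sep_rename_high (q : MvPolynomial (Fin 3) (Polynomial ℝ)) :
    sepVarsP (rename (Fin.natAdd 3) q) = map C q := by
  induction q using MvPolynomial.induction_on with
  | C r => rw [rename_C, sep_C, map_C]
  | add p q hp hq => rw [map_add, map_add, hp, hq, map_add]
  | mul_X p i hp => rw [map_mul, map_mul, hp, rename_X, sep_X_high, map_mul, map_X]

/-- glue two exponent vectors -/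
noncomputable def glue (a b : Fin 3 →₀ ℕ) : Fin 6 →₀ ℕ :=
  a.mapDomain (Fin.castAdd 3) + b.mapDomain (Fin.natAdd 3)

lemma glue_apply_low (a b : Fin 3 →₀ ℕ) (i : Fin 3) : glue a b (Fin.castAdd 3 i) = a i := by
  rw [glue, Finsupp.add_apply,
    Finsupp.mapDomain_apply (Fin.castAdd_injective 3 3),
    Finsupp.mapDomain_notin_range]
  · ring
  · rw [Set.mem_range]; exact notin_range_natAdd i

lemma glue_apply_high (a b : Fin 3 →₀ ℕ) (i : Fin 3) : glue a b (Fin.natAdd 3 i) = b i := by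
  rw [glue, Finsupp.add_apply, Finsupp.mapDomain_apply natAdd_inj,
    Finsupp.mapDomain_notin_range]
  · ring
  · rw [Set.mem_range]; exact notin_range_castAdd i

lemma glue_inj {a b a' b' : Fin 3 →₀ ℕ} (H : glue a b = glue a' b') : a = a' ∧ b = b' := by
  constructor
  · ext i
    rw [← glue_apply_low a b i, H, glue_apply_low]
  · ext i
    rw [← glue_apply_high a b i, H, glue_apply_high]

lemma glue_eta (m : Fin 6 →₀ ℕ) :
    m = glue (Finsupp.equivFunOnFinite.symm fun i => m (Fin.castAdd 3 i))
      (Finsupp.equivFunOnFinite.symm fun i => m (Fin.natAdd 3 i)) := by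
  set a := (Finsupp.equivFunOnFinite.symm fun i => m (Fin.castAdd 3 i) : Fin 3 →₀ ℕ) with ha
  set b := (Finsupp.equivFunOnFinite.symm fun i => m (Fin.natAdd 3 i) : Fin 3 →₀ ℕ) with hb
  ext j
  refine Fin.addCases (m := 3) (n := 3) (motive := fun jj => m jj = glue a b jj) (fun i => ?_) (fun i => ?_) j
  · show m _ = glue a b _
    rw [glue_apply_low, ha]; simp
  · show m _ = glue a b _
    rw [glue_apply_high, hb]; simp

lemma sep_monomial (a b : Fin 3 →₀ ℕ) (r : Polynomial ℝ) :
    sepVarsP (monomial (glue a b) r) = monomial b (monomial a r) := by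
  have e : monomial (glue a b) r =
      rename (Fin.castAdd 3) (monomial a r) * rename (Fin.natAdd 3) (monomial b 1) := by
    rw [rename_monomial, rename_monomial, monomial_mul, mul_one, glue]
  rw [e, map_mul, sep_rename_low, sep_rename_high]
  rw [map_monomial, map_one, C_mul_monomial, mul_one]

lemma sep_coeff (p : MvPolynomial (Fin 6) (Polynomial ℝ)) (dx dy : Fin 3 →₀ ℕ) :
    coeff dx (coeff dy (sepVarsP p)) = coeff (glue dx dy) p := by
  classical
  induction p using MvPolynomial.induction_on' with
  | add p q hp hq => rw [map_add, coeff_add, coeff_add, hp, hq, coeff_add]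
  | monomial m r =>
    obtain ⟨a, b, rfl⟩ : ∃ a b, m = glue a b := ⟨_, _, glue_eta m⟩
    rw [sep_monomial, coeff_monomial, coeff_monomial]
    by_cases hb : b = dy
    · subst hb
      rw [if_pos rfl, coeff_monomial]
      by_cases ha : a = dx
      · subst ha; rw [if_pos rfl, if_pos rfl]
      · rw [if_neg ha, if_neg (fun H => ha (glue_inj H).1)]
    · rw [if_neg hb, if_neg (fun H => hb (glue_inj H).2), coeff_zero]

/-- weight vector: x-variables count, y-variables don't -/
def w6 : Fin 6 → ℕ := fun i => if (i : ℕ) < 3 then 1 else 0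




variable {R : Type*} [CommSemiring R] {σ τ : Type*}

/-- weight of a monomial -/
def wt (w : σ → ℕ) (m : σ →₀ ℕ) : ℕ := m.sum fun i k => w i * k

/-- weighted total degree -/
def wdeg (w : σ → ℕ) (p : MvPolynomial σ R) : ℕ := p.support.sup (wt w)

lemma wt_add (w : σ → ℕ) (m m' : σ →₀ ℕ) : wt w (m + m') = wt w m + wt w m' :=
  Finsupp.sum_add_index' (fun i => by simp) (fun i b c => by ring)

lemma wt_zero (w : σ → ℕ) : wt w 0 = 0 := Finsupp.sum_zero_index

lemma wt_le_wdeg {w : σ → ℕ} {p : MvPolynomial σ R} {m : σ →₀ ℕ} (h : m ∈ p.support) :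
    wt w m ≤ wdeg w p := Finset.le_sup h

lemma wdeg_le {w : σ → ℕ} {p : MvPolynomial σ R} {n : ℕ}
    (H : ∀ m ∈ p.support, wt w m ≤ n) : wdeg w p ≤ n := Finset.sup_le H

lemma wdeg_zero (w : σ → ℕ) : wdeg w (0 : MvPolynomial σ R) = 0 := by
  simp [wdeg]

lemma wdeg_C (w : σ → ℕ) (r : R) : wdeg w (C r : MvPolynomial σ R) = 0 := by
  apply Nat.le_antisymm _ (Nat.zero_le _)
  classical
  apply wdeg_le
  intro m hm
  rw [mem_support_iff, coeff_C] at hm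
  rcases eq_or_ne m 0 with rfl | hne
  · simp [wt_zero]
  · simp [Ne.symm hne] at hm

lemma wdeg_X_le (w : σ → ℕ) (i : σ) : wdeg w (X i : MvPolynomial σ R) ≤ w i := by
  classical
  apply wdeg_le
  intro m hm
  rw [mem_support_iff, coeff_X'] at hm
  split at hm
  · subst ‹Finsupp.single i 1 = m›
    simp [wt, Finsupp.sum_single_index]
  · simp at hm

lemma wdeg_add_le (w : σ → ℕ) (p q : MvPolynomial σ R) :
    wdeg w (p + q) ≤ max (wdeg w p) (wdeg w q) := by
  apply wdeg_le
  intro m hm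
  classical
  rcases Finset.mem_union.mp (Finsupp.support_add hm) with h | h
  · exact le_max_of_le_left (wt_le_wdeg h)
  · exact le_max_of_le_right (wt_le_wdeg h)

lemma wdeg_mul_le (w : σ → ℕ) (p q : MvPolynomial σ R) :
    wdeg w (p * q) ≤ wdeg w p + wdeg w q := by
  classical
  apply wdeg_le
  intro m hm
  obtain ⟨a, ha, b, hb, rfl⟩ := Finset.mem_add.mp (support_mul p q hm)
  rw [wt_add]
  exact Nat.add_le_add (wt_le_wdeg ha) (wt_le_wdeg hb)

lemma wdeg_pow_le (w : σ → ℕ) (p : MvPolynomial σ R) (n : ℕ) :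
    wdeg w (p ^ n) ≤ n * wdeg w p := by
  induction n with
  | zero => simpa using wdeg_C w (1 : R)
  | succ n ih =>
    rw [pow_succ]
    calc wdeg w (p ^ n * p) ≤ wdeg w (p ^ n) + wdeg w p := wdeg_mul_le _ _ _
    _ ≤ n * wdeg w p + wdeg w p := Nat.add_le_add_right ih _
    _ = (n + 1) * wdeg w p := by ring

lemma wdeg_sum_le {ι : Type*} (w : σ → ℕ) (t : Finset ι) (f : ι → MvPolynomial σ R) (n : ℕ)
    (H : ∀ i ∈ t, wdeg w (f i) ≤ n) : wdeg w (∑ i ∈ t, f i) ≤ n := by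
  classical
  induction t using Finset.induction_on with
  | empty => simp [wdeg_zero]
  | insert _ _ hnot ih =>
    rename_i a t'
    rw [Finset.sum_insert hnot]
    refine le_trans (wdeg_add_le _ _ _) (max_le (H _ (Finset.mem_insert_self _ _)) ?_)
    exact ih fun i hi => H i (Finset.mem_insert_of_mem hi)

lemma wdeg_neg {R : Type*} [CommRing R] (w : σ → ℕ) (p : MvPolynomial σ R) :
    wdeg w (-p) = wdeg w p := by
  simp [wdeg, support_neg]

lemma totalDegree_eq_wdeg (p : MvPolynomial σ R) :
    p.totalDegree = wdeg (fun _ => 1) p := by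
  unfold wdeg wt MvPolynomial.totalDegree
  congr 1
  funext m
  congr 1
  funext i k
  ring

/-- key evaluation bound -/
lemma wdeg_eval₂_le {S : Type*} [CommSemiring S] [Fintype σ] (w : τ → ℕ)
    (f : R →+* MvPolynomial τ S) (hf : ∀ r, wdeg w (f r) = 0)
    (v : σ → MvPolynomial τ S) (c : ℕ) (hv : ∀ j, wdeg w (v j) ≤ c)
    (q : MvPolynomial σ R) : wdeg w (eval₂ f v q) ≤ c * q.totalDegree := by
  rw [eval₂_eq']
  apply wdeg_sum_le
  intro m hm
  have h1 : wdeg w (∏ i, v i ^ m i) ≤ ∑ i, m i * c := by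
    classical
    induction (Finset.univ : Finset σ) using Finset.induction_on with
    | empty => simpa using wdeg_C w (1 : S)
    | insert _ _ hnot ih =>
      rename_i a t'
      rw [Finset.prod_insert hnot, Finset.sum_insert hnot]
      refine le_trans (wdeg_mul_le _ _ _) (Nat.add_le_add ?_ ih)
      exact le_trans (wdeg_pow_le _ _ _) (Nat.mul_le_mul_left _ (hv a))
  calc wdeg w (f (coeff m q) * ∏ i, v i ^ m i)
      ≤ wdeg w (f (coeff m q)) + wdeg w (∏ i, v i ^ m i) := wdeg_mul_le _ _ _
    _ ≤ 0 + ∑ i, m i * c := Nat.add_le_add (le_of_eq (hf _)) h1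
    _ = (∑ i, m i) * c := by rw [Nat.zero_add, Finset.sum_mul]
    _ ≤ q.totalDegree * c := by
        apply Nat.mul_le_mul_right
        have e1 : (∑ i, m i) = m.sum fun _ k => k := by
          rw [Finsupp.sum_fintype]; intro; rfl
        rw [e1]; exact le_totalDegree hm
    _ = c * q.totalDegree := Nat.mul_comm _ _


section Helpers3
open Polynomial in
noncomputable def muh (s : Fin 4 → ℝ) : MvPolynomial (Fin 3) (Polynomial ℝ) →+* ℝ :=
  eval₂Hom (Polynomial.evalRingHom (s 0)) fun k => s k.succ

noncomputable def valsh (s : Fin 4 → ℝ) : Fin 6 → MvPolynomial (Fin 3) ℝ :=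
  ![C (s 1), C (s 2), C (s 3), X 0, X 1, X 2]

noncomputable def epsh (s : Fin 4 → ℝ) :
    MvPolynomial (Fin 6) (Polynomial ℝ) →+* MvPolynomial (Fin 3) ℝ :=
  eval₂Hom ((C : ℝ →+* MvPolynomial (Fin 3) ℝ).comp (Polynomial.evalRingHom (s 0))) (valsh s)

variable (s : Fin 4 → ℝ)

@[simp] lemma muh_C (p : Polynomial ℝ) : muh s (C p) = p.eval (s 0) := by
  simp [muh]

@[simp] lemma muh_X (k : Fin 3) : muh s (X k) = s k.succ := by
  simp [muh]

@[simp] lemma epsh_C (p : Polynomial ℝ) : epsh s (C p) = C (p.eval (s 0)) := by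
  simp [epsh]

@[simp] lemma epsh_X (i : Fin 6) : epsh s (X i) = valsh s i := by
  simp [epsh]

lemma map_sep_eq (p : MvPolynomial (Fin 6) (Polynomial ℝ)) :
    map (muh s) (sepVarsP p) = epsh s p := by
  induction p using MvPolynomial.induction_on with
  | C r => rw [sep_C, map_C, muh_C, epsh_C]
  | add p q hp hq => rw [map_add, map_add, hp, hq, map_add]
  | mul_X p i hp =>
    rw [map_mul, map_mul, hp, map_mul, epsh_X]
    congr 1
    refine Fin.addCases (m := 3) (n := 3)
      (motive := fun j => map (muh s) (sepVarsP (X j)) = valsh s j) (fun k => ?_) (fun k => ?_) i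
    · show map (muh s) (sepVarsP (X (Fin.castAdd 3 k))) = valsh s (Fin.castAdd 3 k)
      rw [sep_X_low, map_C, muh_X]
      fin_cases k <;> rfl
    · show map (muh s) (sepVarsP (X (Fin.natAdd 3 k))) = valsh s (Fin.natAdd 3 k)
      rw [sep_X_high, map_X]
      fin_cases k <;> rfl

lemma epsh_aeval (u : Fin 3 → MvPolynomial (Fin 6) (Polynomial ℝ))
    (q : MvPolynomial (Fin 3) (Polynomial ℝ)) :
    epsh s (aeval u q) =
      eval₂Hom ((C : ℝ →+* MvPolynomial (Fin 3) ℝ).comp (Polynomial.evalRingHom (s 0)))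
        (fun j => epsh s (u j)) q := by
  rw [map_aeval]
  apply eval₂Hom_congr _ rfl rfl
  refine RingHom.ext fun p => ?_
  rw [RingHom.comp_apply, MvPolynomial.algebraMap_eq, epsh_C, RingHom.comp_apply]
  rfl

lemma C_muh (q : MvPolynomial (Fin 3) (Polynomial ℝ)) :
    (C (muh s q) : MvPolynomial (Fin 3) ℝ) =
      eval₂Hom ((C : ℝ →+* MvPolynomial (Fin 3) ℝ).comp (Polynomial.evalRingHom (s 0)))
        (fun k => C (s k.succ)) q := by
  have := eval₂_comp_left (C : ℝ →+* MvPolynomial (Fin 3) ℝ)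
    (Polynomial.evalRingHom (s 0)) (fun k => s k.succ) q
  simpa [muh, Function.comp_def] using this

lemma det_eq_zero_of_mulVec_eq_zero {R : Type*} [CommRing R] {n : Type*} [Fintype n]
    [DecidableEq n] (A : Matrix n n R) (c : n → R) (h : A.mulVec c = 0) (j : n)
    (hj : c j = 1) : A.det = 0 := by
  have h2 : A.det • c = 0 := by
    calc A.det • c = A.det • ((1 : Matrix n n R).mulVec c) := by rw [Matrix.one_mulVec]
    _ = (A.det • (1 : Matrix n n R)).mulVec c := (Matrix.smul_mulVec _ _ _).symm
    _ = (A.adjugate * A).mulVec c := by rw [Matrix.adjugate_mul]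
    _ = A.adjugate.mulVec (A.mulVec c) := by rw [← Matrix.mulVec_mulVec]
    _ = 0 := by rw [h, Matrix.mulVec_zero]
  have h3 := congrFun h2 j
  simpa [hj] using h3

lemma wdeg_of_mul_linear {σ : Type*} {R : Type*} [CommRing R] [Nontrivial R]
    (w : σ → ℕ) {a b : σ} (hwa : w a = 1) (hwb : w b = 0)
    (q : MvPolynomial σ R) (k : ℕ) (hk : wdeg w (q * (X a - X b)) ≤ k + 1) :
    wdeg w q ≤ k := by
  classical
  rcases eq_or_ne q 0 with rfl | hq
  · simp [wdeg_zero]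
  have hab : a ≠ b := fun H => by rw [H, hwb] at hwa; exact one_ne_zero hwa.symm
  obtain ⟨m, hm, hms⟩ := Finset.exists_mem_eq_sup q.support
    (MvPolynomial.support_nonempty.mpr hq) (wt w)
  have hms' : wdeg w q = wt w m := hms
  have hsa : wt w (Finsupp.single a 1) = 1 := by
    rw [wt, Finsupp.sum_single_index] <;> simp [hwa]
  have hsb : wt w (Finsupp.single b 1) = 0 := by
    rw [wt, Finsupp.sum_single_index] <;> simp [hwb]
  have hcoeff : coeff (m + Finsupp.single a 1) (q * (X a - X b)) = coeff m q := by
    rw [mul_sub, coeff_sub, coeff_mul_X, coeff_mul_X']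
    have hzero : (if b ∈ (m + Finsupp.single a 1).support then
        coeff (m + Finsupp.single a 1 - Finsupp.single b 1) q else 0) = 0 := by
      split
      · rename_i hbmem
        apply notMem_support_iff.mp
        intro hmem
        have hle : Finsupp.single b 1 ≤ m + Finsupp.single a 1 := by
          rw [Finsupp.single_le_iff]
          have := Finsupp.mem_support_iff.mp hbmem
          omega
        have hsum : (m + Finsupp.single a 1 - Finsupp.single b 1) + Finsupp.single b 1
            = m + Finsupp.single a 1 := tsub_add_cancel_of_le hle
        have hwteq := congrArg (wt w) hsum
        rw [wt_add, wt_add, hsb, hsa] at hwteq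
        have hle2 : wt w (m + Finsupp.single a 1 - Finsupp.single b 1) ≤ wdeg w q :=
          wt_le_wdeg hmem
        omega
      · rfl
    rw [hzero, sub_zero]
  have hmem2 : m + Finsupp.single a 1 ∈ (q * (X a - X b)).support := by
    rw [mem_support_iff, hcoeff]
    exact mem_support_iff.mp hm
  have h4 := wt_le_wdeg (w := w) hmem2
  rw [wt_add, hsa] at h4
  omega

lemma wt_glue (a b : Fin 3 →₀ ℕ) : wt w6 (glue a b) = a.sum fun _ k => k := by
  rw [glue, wt_add]
  have h1 : wt w6 (Finsupp.mapDomain (Fin.castAdd 3) a) = a.sum fun _ k => k := by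
    rw [wt, Finsupp.sum_mapDomain_index (fun _ => by simp) (fun _ _ _ => by ring)]
    apply Finsupp.sum_congr
    intro i _
    have : w6 (Fin.castAdd 3 i) = 1 := by
      simp [w6, Fin.is_lt i]
    rw [this, one_mul]
  have h2 : wt w6 (Finsupp.mapDomain (Fin.natAdd 3) b) = 0 := by
    rw [wt, Finsupp.sum_mapDomain_index (fun _ => by simp) (fun _ _ _ => by ring)]
    have : ∀ i ∈ b.support, w6 (Fin.natAdd 3 i) * b i = 0 := by
      intro i _
      have : w6 (Fin.natAdd 3 i) = 0 := by simp [w6]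
      rw [this, zero_mul]
    exact Finset.sum_eq_zero this
  rw [h1, h2, add_zero]

end Helpers3

end DixAux

/-- Four quadrics `f1,...,f4` in the unknowns `q0,q1,q2,q3`; regarding `q0` as a
parameter, `F i ∈ ℝ[q0][q1,q2,q3]` and the Dixon matrix `D` has entries in
`ℝ[q0]`.  If `(s0,s1,s2,s3)` is a common zero of the `f i`, then the univariate
polynomial `det D ∈ ℝ[q0]` vanishes at `s0`. -/
theorem stmt_14
    (f : Fin 4 → MvPolynomial (Fin 4) ℝ)
    (hdeg : ∀ i, (f i).totalDegree ≤ 2)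
    -- `F i` is `f i` with `q0` pushed into the coefficient ring `ℝ[q0]`
    (F : Fin 4 → MvPolynomial (Fin 3) (Polynomial ℝ))
    (hF : ∀ i, F i = aeval ![C Polynomial.X, X 0, X 1, X 2] (f i))
    (h : Fin 4 → Fin 3 → MvPolynomial (Fin 6) (Polynomial ℝ))
    (hh0 : ∀ i, h i 0 * (X 0 - X 3) =
      aeval ![(X 0 : MvPolynomial (Fin 6) (Polynomial ℝ)), X 1, X 2] (F i) -
        aeval ![(X 3 : MvPolynomial (Fin 6) (Polynomial ℝ)), X 1, X 2] (F i))
    (hh1 : ∀ i, h i 1 * (X 1 - X 4) =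
      aeval ![(X 3 : MvPolynomial (Fin 6) (Polynomial ℝ)), X 1, X 2] (F i) -
        aeval ![(X 3 : MvPolynomial (Fin 6) (Polynomial ℝ)), X 4, X 2] (F i))
    (hh2 : ∀ i, h i 2 * (X 2 - X 5) =
      aeval ![(X 3 : MvPolynomial (Fin 6) (Polynomial ℝ)), X 4, X 2] (F i) -
        aeval ![(X 3 : MvPolynomial (Fin 6) (Polynomial ℝ)), X 4, X 5] (F i))
    (U : Matrix (Fin 4) (Fin 4) (MvPolynomial (Fin 6) (Polynomial ℝ)))
    (hU : ∀ i, U i = ![h i 0, h i 1, h i 2,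
      aeval ![(X 3 : MvPolynomial (Fin 6) (Polynomial ℝ)), X 4, X 5] (F i)])
    (ψ : (Fin 3 →₀ ℕ) → MvPolynomial (Fin 3) (Polynomial ℝ))
    (hψ : ∀ d, ψ d = coeff d (sepVarsP U.det))
    -- `M` enumerates the 20 monomials of degree at most 3 in `q1,q2,q3`
    (M : Fin 20 → (Fin 3 →₀ ℕ))
    (hMinj : Function.Injective M)
    (hMdeg : ∀ j, (M j).sum (fun _ n => n) ≤ 3)
    (hMall : ∀ d : Fin 3 →₀ ℕ, d.sum (fun _ n => n) ≤ 3 → ∃ j, M j = d)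
    -- the twenty cubics
    (g : Fin 20 → MvPolynomial (Fin 3) (Polynomial ℝ))
    (hg : g = ![F 0, F 1, F 2, F 3,
      X 0 * F 0, X 0 * F 1, X 0 * F 2, X 0 * F 3,
      X 1 * F 0, X 1 * F 1, X 1 * F 2, X 1 * F 3,
      X 2 * F 0, X 2 * F 1, X 2 * F 2, X 2 * F 3,
      ψ 0, ψ (Finsupp.single 0 1), ψ (Finsupp.single 1 1), ψ (Finsupp.single 2 1)])
    -- the Dixon matrix `Dix(f1,f2,f3,f4; q1,q2,q3)` with entries in `ℝ[q0]`
    (D : Matrix (Fin 20) (Fin 20) (Polynomial ℝ))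
    (hD : ∀ i j, D i j = coeff (M j) (g i))
    (s : Fin 4 → ℝ) (hs : ∀ i, eval s (f i) = 0) :
    Polynomial.eval (s 0) D.det = 0 := by
  classical
  open DixAux in
  -- basic degree facts
  have halg6 : ∀ r : Polynomial ℝ,
      algebraMap (Polynomial ℝ) (MvPolynomial (Fin 6) (Polynomial ℝ)) r = C r := fun _ => rfl
  have halg3 : ∀ r : ℝ,
      algebraMap ℝ (MvPolynomial (Fin 3) (Polynomial ℝ)) r = C (Polynomial.C r) := fun _ => rfl
  have hF2 : ∀ i, (F i).totalDegree ≤ 2 := by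
    intro i
    rw [hF i, totalDegree_eq_wdeg, aeval_def]
    refine le_trans (wdeg_eval₂_le _ _ ?_ _ 1 ?_ (f i)) ?_
    · intro r; rw [halg3 r, wdeg_C]
    · intro j
      fin_cases j
      · exact le_trans (le_of_eq (wdeg_C _ _)) (by omega)
      · exact wdeg_X_le _ _
      · exact wdeg_X_le _ _
      · exact wdeg_X_le _ _
    · rw [one_mul]; exact hdeg i
  have hXw : ∀ a : Fin 6, wdeg w6 (X a : MvPolynomial (Fin 6) (Polynomial ℝ)) ≤ 1 := by
    intro a
    refine le_trans (wdeg_X_le _ _) ?_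
    unfold w6
    split <;> omega
  have hAe : ∀ (v : Fin 3 → MvPolynomial (Fin 6) (Polynomial ℝ)),
      (∀ j, wdeg w6 (v j) ≤ 1) → ∀ i, wdeg w6 (aeval v (F i)) ≤ 2 := by
    intro v hv i
    rw [aeval_def]
    refine le_trans (wdeg_eval₂_le w6 _ ?_ v 1 hv (F i)) ?_
    · intro r; rw [halg6 r, wdeg_C]
    · rw [one_mul]; exact hF2 i
  have hsubw : ∀ (p q : MvPolynomial (Fin 6) (Polynomial ℝ)) (n : ℕ),
      wdeg w6 p ≤ n → wdeg w6 q ≤ n → wdeg w6 (p - q) ≤ n := by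
    intro p q n hp hq
    rw [sub_eq_add_neg]
    refine le_trans (wdeg_add_le _ _ _) (max_le hp ?_)
    rw [wdeg_neg]; exact hq
  have hv3 : ∀ (a b c : Fin 6), (∀ j, wdeg w6 ((![X a, X b, X c] :
      Fin 3 → MvPolynomial (Fin 6) (Polynomial ℝ)) j) ≤ 1) := by
    intro a b c j
    fin_cases j
    · exact hXw a
    · exact hXw b
    · exact hXw c
  have hh0w : ∀ i, wdeg w6 (h i 0) ≤ 1 := by
    intro i
    refine wdeg_of_mul_linear w6 (a := (0 : Fin 6)) (b := (3 : Fin 6)) (by decide) (by decide) (h i 0) 1 ?_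
    rw [hh0 i]
    exact hsubw _ _ 2 (hAe _ (hv3 0 1 2) i) (hAe _ (hv3 3 1 2) i)
  have hh1w : ∀ i, wdeg w6 (h i 1) ≤ 1 := by
    intro i
    refine wdeg_of_mul_linear w6 (a := (1 : Fin 6)) (b := (4 : Fin 6)) (by decide) (by decide) (h i 1) 1 ?_
    rw [hh1 i]
    exact hsubw _ _ 2 (hAe _ (hv3 3 1 2) i) (hAe _ (hv3 3 4 2) i)
  have hh2w : ∀ i, wdeg w6 (h i 2) ≤ 1 := by
    intro i
    refine wdeg_of_mul_linear w6 (a := (2 : Fin 6)) (b := (5 : Fin 6)) (by decide) (by decide) (h i 2) 1 ?_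
    rw [hh2 i]
    exact hsubw _ _ 2 (hAe _ (hv3 3 4 2) i) (hAe _ (hv3 3 4 5) i)
  have hcol3 : ∀ i, wdeg w6 (aeval ![(X 3 : MvPolynomial (Fin 6) (Polynomial ℝ)), X 4, X 5]
      (F i)) ≤ 0 := by
    intro i
    rw [aeval_def]
    refine le_trans (wdeg_eval₂_le w6 _ ?_ _ 0 ?_ (F i)) ?_
    · intro r; rw [halg6 r, wdeg_C]
    · intro j
      fin_cases j
      · exact le_trans (wdeg_X_le _ _) (by decide)
      · exact le_trans (wdeg_X_le _ _) (by decide)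
      · exact le_trans (wdeg_X_le _ _) (by decide)
    · rw [zero_mul]
  have hdet3 : wdeg w6 U.det ≤ 3 := by
    rw [Matrix.det_apply]
    apply wdeg_sum_le
    intro p _
    have hprod : wdeg w6 (∏ k, U (p k) k) ≤ 3 := by
      rw [Fin.prod_univ_four, hU (p 0), hU (p 1), hU (p 2), hU (p 3)]
      refine le_trans (wdeg_mul_le _ _ _) ?_
      refine le_trans (Nat.add_le_add (le_trans (wdeg_mul_le _ _ _)
        (Nat.add_le_add (le_trans (wdeg_mul_le _ _ _)
          (Nat.add_le_add (hh0w (p 0)) (hh1w (p 1)))) (hh2w (p 2)))) (hcol3 (p 3))) ?_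
      norm_num
    rcases Int.units_eq_one_or (Equiv.Perm.sign p) with hsg | hsg <;> rw [hsg]
    · rw [one_smul]; exact hprod
    · rw [Units.neg_smul, one_smul, wdeg_neg]; exact hprod
  have hpsideg : ∀ d, (ψ d).totalDegree ≤ 3 := by
    intro d
    rw [hψ d, totalDegree_eq_wdeg]
    apply wdeg_le
    intro m hm
    have hne : coeff (glue m d) U.det ≠ 0 := by
      rw [← sep_coeff]
      exact mem_support_iff.mp hm
    have hle := wt_le_wdeg (w := w6) (mem_support_iff.mpr hne)
    have heq : wt (fun _ => (1 : ℕ)) m = wt w6 (glue m d) := by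
      rw [wt_glue, wt]
      apply Finsupp.sum_congr
      intro i _
      rw [one_mul]
    rw [heq]
    exact le_trans hle hdet3
  -- evaluation facts
  have hmuF : ∀ i, muh s (F i) = 0 := by
    intro i
    rw [hF i, map_aeval]
    have h1 : (muh s).comp (algebraMap ℝ (MvPolynomial (Fin 3) (Polynomial ℝ)))
        = RingHom.id ℝ := by
      refine RingHom.ext fun r => ?_
      rw [RingHom.comp_apply, halg3 r, muh_C, Polynomial.eval_C, RingHom.id_apply]
    have h2 : (fun j => muh s ((![C Polynomial.X, X 0, X 1, X 2] :
        Fin 4 → MvPolynomial (Fin 3) (Polynomial ℝ)) j)) = s := by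
      funext j
      fin_cases j
      · show muh s (C Polynomial.X) = s 0
        rw [muh_C, Polynomial.eval_X]
      · show muh s (X 0) = s 1
        rw [muh_X]; rfl
      · show muh s (X 1) = s 2
        rw [muh_X]; rfl
      · show muh s (X 2) = s 3
        rw [muh_X]; rfl
    rw [h1, h2]
    exact hs i
  -- the telescoping identity and vanishing of the epsh image of det U
  have hepsdet : epsh s U.det = 0 := by
    set φ : Polynomial ℝ →+* MvPolynomial (Fin 3) ℝ := (C : ℝ →+* MvPolynomial (Fin 3) ℝ).comp
      (Polynomial.evalRingHom (s 0)) with hφ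
    have v012 : (fun j => epsh s ((![X 0, X 1, X 2] :
        Fin 3 → MvPolynomial (Fin 6) (Polynomial ℝ)) j)) = ![C (s 1), C (s 2), C (s 3)] := by
      funext j; fin_cases j
      · show epsh s (X 0) = C (s 1)
        rw [epsh_X]; rfl
      · show epsh s (X 1) = C (s 2)
        rw [epsh_X]; rfl
      · show epsh s (X 2) = C (s 3)
        rw [epsh_X]; rfl
    have v312 : (fun j => epsh s ((![X 3, X 1, X 2] :
        Fin 3 → MvPolynomial (Fin 6) (Polynomial ℝ)) j)) = ![X 0, C (s 2), C (s 3)] := by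
      funext j; fin_cases j
      · show epsh s (X 3) = X 0
        rw [epsh_X]; rfl
      · show epsh s (X 1) = C (s 2)
        rw [epsh_X]; rfl
      · show epsh s (X 2) = C (s 3)
        rw [epsh_X]; rfl
    have v342 : (fun j => epsh s ((![X 3, X 4, X 2] :
        Fin 3 → MvPolynomial (Fin 6) (Polynomial ℝ)) j)) = ![X 0, X 1, C (s 3)] := by
      funext j; fin_cases j
      · show epsh s (X 3) = X 0
        rw [epsh_X]; rfl
      · show epsh s (X 4) = X 1
        rw [epsh_X]; rfl
      · show epsh s (X 2) = C (s 3)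
        rw [epsh_X]; rfl
    have v345 : (fun j => epsh s ((![X 3, X 4, X 5] :
        Fin 3 → MvPolynomial (Fin 6) (Polynomial ℝ)) j)) = ![X 0, X 1, X 2] := by
      funext j; fin_cases j
      · show epsh s (X 3) = X 0
        rw [epsh_X]; rfl
      · show epsh s (X 4) = X 1
        rw [epsh_X]; rfl
      · show epsh s (X 5) = X 2
        rw [epsh_X]; rfl
    have t0z : ∀ i, eval₂Hom φ ![C (s 1), C (s 2), C (s 3)] (F i) = 0 := by
      intro i
      have hc : (fun k : Fin 3 => (C (s k.succ) : MvPolynomial (Fin 3) ℝ))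
          = ![C (s 1), C (s 2), C (s 3)] := by
        funext k; fin_cases k <;> rfl
      rw [← hc, ← C_muh s (F i), hmuF i, map_zero]
    set A : Matrix (Fin 4) (Fin 4) (MvPolynomial (Fin 3) ℝ) := (epsh s).mapMatrix U with hA
    set c4 : Fin 4 → MvPolynomial (Fin 3) ℝ :=
      ![C (s 1) - X 0, C (s 2) - X 1, C (s 3) - X 2, 1] with hc4
    have hAc : A.mulVec c4 = 0 := by
      funext i
      have e0 := congrArg (epsh s) (hh0 i)
      rw [map_mul, map_sub, map_sub, epsh_aeval, epsh_aeval, epsh_X, epsh_X,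
        v012, v312] at e0
      have e1 := congrArg (epsh s) (hh1 i)
      rw [map_mul, map_sub, map_sub, epsh_aeval, epsh_aeval, epsh_X, epsh_X,
        v312, v342] at e1
      have e2 := congrArg (epsh s) (hh2 i)
      rw [map_mul, map_sub, map_sub, epsh_aeval, epsh_aeval, epsh_X, epsh_X,
        v342, v345] at e2
      have t3 : epsh s (aeval ![(X 3 : MvPolynomial (Fin 6) (Polynomial ℝ)), X 4, X 5] (F i))
          = eval₂Hom φ ![X 0, X 1, X 2] (F i) := by
        rw [epsh_aeval, v345]
      have hvals0 : valsh s 0 = C (s 1) := rfl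
      have hvals1 : valsh s 1 = C (s 2) := rfl
      have hvals2 : valsh s 2 = C (s 3) := rfl
      have hvals3 : valsh s 3 = X 0 := rfl
      have hvals4 : valsh s 4 = X 1 := rfl
      have hvals5 : valsh s 5 = X 2 := rfl
      rw [hvals0, hvals3] at e0
      rw [hvals1, hvals4] at e1
      rw [hvals2, hvals5] at e2
      have hrow : A.mulVec c4 i = epsh s (h i 0) * (C (s 1) - X 0)
          + epsh s (h i 1) * (C (s 2) - X 1) + epsh s (h i 2) * (C (s 3) - X 2)
          + epsh s (aeval ![(X 3 : MvPolynomial (Fin 6) (Polynomial ℝ)), X 4, X 5] (F i)) := by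
        rw [Matrix.mulVec, dotProduct, Fin.sum_univ_four, hc4, hA]
        rw [RingHom.mapMatrix_apply]
        rw [Matrix.map_apply, Matrix.map_apply, Matrix.map_apply, Matrix.map_apply]
        rw [hU i]
        have q0 : (![C (s 1) - X 0, C (s 2) - X 1, C (s 3) - X 2, 1] :
            Fin 4 → MvPolynomial (Fin 3) ℝ) 0 = C (s 1) - X 0 := rfl
        have q1 : (![C (s 1) - X 0, C (s 2) - X 1, C (s 3) - X 2, 1] :
            Fin 4 → MvPolynomial (Fin 3) ℝ) 1 = C (s 2) - X 1 := rfl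
        have q2 : (![C (s 1) - X 0, C (s 2) - X 1, C (s 3) - X 2, 1] :
            Fin 4 → MvPolynomial (Fin 3) ℝ) 2 = C (s 3) - X 2 := rfl
        have q3 : (![C (s 1) - X 0, C (s 2) - X 1, C (s 3) - X 2, 1] :
            Fin 4 → MvPolynomial (Fin 3) ℝ) 3 = 1 := rfl
        have u0 : (![h i 0, h i 1, h i 2, aeval ![(X 3 : MvPolynomial (Fin 6) (Polynomial ℝ)),
            X 4, X 5] (F i)] : Fin 4 → MvPolynomial (Fin 6) (Polynomial ℝ)) 0 = h i 0 := rfl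
        have u1 : (![h i 0, h i 1, h i 2, aeval ![(X 3 : MvPolynomial (Fin 6) (Polynomial ℝ)),
            X 4, X 5] (F i)] : Fin 4 → MvPolynomial (Fin 6) (Polynomial ℝ)) 1 = h i 1 := rfl
        have u2 : (![h i 0, h i 1, h i 2, aeval ![(X 3 : MvPolynomial (Fin 6) (Polynomial ℝ)),
            X 4, X 5] (F i)] : Fin 4 → MvPolynomial (Fin 6) (Polynomial ℝ)) 2 = h i 2 := rfl
        have u3 : (![h i 0, h i 1, h i 2, aeval ![(X 3 : MvPolynomial (Fin 6) (Polynomial ℝ)),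
            X 4, X 5] (F i)] : Fin 4 → MvPolynomial (Fin 6) (Polynomial ℝ)) 3
            = aeval ![(X 3 : MvPolynomial (Fin 6) (Polynomial ℝ)), X 4, X 5] (F i) := rfl
        rw [q0, q1, q2, q3, u0, u1, u2, u3]
        ring
      rw [hrow]
      show _ = (0 : Fin 4 → MvPolynomial (Fin 3) ℝ) i
      rw [Pi.zero_apply]
      have t0 := t0z i
      linear_combination e0 + e1 + e2 + t3 + t0
    have hdetA : A.det = 0 := by
      refine det_eq_zero_of_mulVec_eq_zero A c4 hAc 3 ?_
      rw [hc4]; rfl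
    rw [RingHom.map_det] at *
    exact hdetA
  have hmupsi : ∀ d, muh s (ψ d) = 0 := by
    intro d
    rw [hψ d]
    have : coeff d (map (muh s) (sepVarsP U.det)) = muh s (coeff d (sepVarsP U.det)) :=
      coeff_map _ _ _
    rw [← this, map_sep_eq s U.det, hepsdet, coeff_zero]
  -- the 20 rows
  have hmulF : ∀ (k : Fin 3) (i : Fin 4), muh s (X k * F i) = 0 := by
    intro k i
    rw [map_mul, hmuF i, mul_zero]
  have hgz : ∀ i, muh s (g i) = 0 := by
    intro i
    rw [hg]
    fin_cases i
    · exact hmuF 0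
    · exact hmuF 1
    · exact hmuF 2
    · exact hmuF 3
    · exact hmulF 0 0
    · exact hmulF 0 1
    · exact hmulF 0 2
    · exact hmulF 0 3
    · exact hmulF 1 0
    · exact hmulF 1 1
    · exact hmulF 1 2
    · exact hmulF 1 3
    · exact hmulF 2 0
    · exact hmulF 2 1
    · exact hmulF 2 2
    · exact hmulF 2 3
    · exact hmupsi 0
    · exact hmupsi (Finsupp.single 0 1)
    · exact hmupsi (Finsupp.single 1 1)
    · exact hmupsi (Finsupp.single 2 1)
  have hXF3 : ∀ (k : Fin 3) (i : Fin 4), (X k * F i).totalDegree ≤ 3 := by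
    intro k i
    refine le_trans (totalDegree_mul _ _) ?_
    have h1 : (X k : MvPolynomial (Fin 3) (Polynomial ℝ)).totalDegree = 1 := totalDegree_X _
    have h2 := hF2 i
    omega
  have hF3 : ∀ i : Fin 4, (F i).totalDegree ≤ 3 := fun i => le_trans (hF2 i) (by omega)
  have htd : ∀ i, (g i).totalDegree ≤ 3 := by
    intro i
    rw [hg]
    fin_cases i
    · exact hF3 0
    · exact hF3 1
    · exact hF3 2
    · exact hF3 3
    · exact hXF3 0 0
    · exact hXF3 0 1
    · exact hXF3 0 2
    · exact hXF3 0 3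
    · exact hXF3 1 0
    · exact hXF3 1 1
    · exact hXF3 1 2
    · exact hXF3 1 3
    · exact hXF3 2 0
    · exact hXF3 2 1
    · exact hXF3 2 2
    · exact hXF3 2 3
    · exact hpsideg 0
    · exact hpsideg (Finsupp.single 0 1)
    · exact hpsideg (Finsupp.single 1 1)
    · exact hpsideg (Finsupp.single 2 1)
  -- the Dixon matrix evaluated at s 0
  set B : Matrix (Fin 20) (Fin 20) ℝ := (Polynomial.evalRingHom (s 0)).mapMatrix D with hB
  set v : Fin 20 → ℝ := fun j => ∏ k : Fin 3, s k.succ ^ (M j) k with hv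
  have hrow : ∀ i, B.mulVec v i = muh s (g i) := by
    intro i
    rw [Matrix.mulVec, dotProduct]
    have hterm : ∀ j, B i j * v j
        = Polynomial.eval (s 0) (coeff (M j) (g i)) * ∏ k : Fin 3, s k.succ ^ (M j) k := by
      intro j
      rw [hB, RingHom.mapMatrix_apply, Matrix.map_apply, hD i j, hv]
      rfl
    rw [Finset.sum_congr rfl fun j _ => hterm j]
    have hmu : muh s (g i) = ∑ d ∈ (g i).support,
        Polynomial.eval (s 0) (coeff d (g i)) * ∏ k : Fin 3, s k.succ ^ d k := by
      show eval₂ (Polynomial.evalRingHom (s 0)) (fun k => s k.succ) (g i) = _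
      rw [eval₂_eq']
      rfl
    rw [hmu]
    have hsub : (g i).support ⊆ Finset.image M Finset.univ := by
      intro m hm
      have h1 : (m.sum fun _ n => n) ≤ 3 := le_trans (le_totalDegree hm) (htd i)
      obtain ⟨j, hj⟩ := hMall m h1
      exact Finset.mem_image.mpr ⟨j, Finset.mem_univ j, hj⟩
    rw [Finset.sum_subset hsub ?vanish]
    · rw [Finset.sum_image (fun a _ b _ hab => hMinj hab)]
    case vanish =>
      intro m _ hm
      rw [notMem_support_iff.mp hm, Polynomial.eval_zero, zero_mul]
  have hBv : B.mulVec v = 0 := by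
    funext i
    rw [hrow i, hgz i]
    rfl
  obtain ⟨j0, hj0⟩ := hMall 0 (by simp)
  have hvj0 : v j0 = 1 := by
    rw [hv]
    show (∏ k : Fin 3, s k.succ ^ (M j0) k) = 1
    rw [hj0]
    simp
  have hdetB : B.det = 0 := det_eq_zero_of_mulVec_eq_zero B v hBv j0 hvj0
  have : Polynomial.eval (s 0) D.det = Polynomial.evalRingHom (s 0) D.det := rfl
  rw [this, RingHom.map_det, ← hB]
  exact hdetB
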